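/- Let μ be a partition with ℓ ≥ 1 removable corners, of weights R_1,…,R_ℓ, and ℓ+1 addable corners, of weights A_0,…,A_ℓ, and for each i set c_i = (qt·R_i/M)·∏_{j=0}^{ℓ}(1 − A_j/(qt·R_i)) / ∏_{1≤i'≤ℓ, i'≠i}(1 − R_{i'}/R_i) ∈ ℚ(q,t), where M = (1−t)(1−q). Then: (a) Σ_{i=1}^{ℓ} c_i = B_μ; and (b) for every integer k ≥ 1, Σ_{i=1}^{ℓ} c_i·R_i^k = (qt/M) times the coefficient of y^{k+1} in the formal power series ∏_{j=0}^{ℓ}(1 − (A_j/(qt))·y) / ∏_{i=1}^{ℓ}(1 − R_i·y) ∈ ℚ(q,t)[[y]]. (This is the summation formula Σ_{ν→μ} c_{μν}(T_μ/T_ν)^k = (tq/M)·h_{k+1}[D_μ/tq] for the e_1^⊥-Pieri coefficients of modified Macdonald polynomials.) -/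

import Mathlib

open scoped Classical
open PowerSeries

noncomputable section

abbrev K := FractionRing (MvPolynomial (Fin 2) ℚ)

def q : K := algebraMap (MvPolynomial (Fin 2) ℚ) K (MvPolynomial.X 0)
def t : K := algebraMap (MvPolynomial (Fin 2) ℚ) K (MvPolynomial.X 1)

/-- the weight of a cell `(i,j)` (row `i`, column `j`) is `t^i * q^j` -/
def w (c : ℕ × ℕ) : K := t ^ c.1 * q ^ c.2

/-- `B_μ = Σ_{c ∈ μ} w(c)` -/
def Bsum (μ : YoungDiagram) : K := ∑ c ∈ μ.cells, w c

/-- a removable corner: a cell of `μ` whose removal leaves a Young diagram -/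
def IsRemovable (μ : YoungDiagram) (c : ℕ × ℕ) : Prop :=
  c ∈ μ ∧ IsLowerSet (↑(μ.cells.erase c) : Set (ℕ × ℕ))

/-- an addable corner: a cell not in `μ` whose addition gives a Young diagram -/
def IsAddable (μ : YoungDiagram) (c : ℕ × ℕ) : Prop :=
  c ∉ μ ∧ IsLowerSet (↑(insert c μ.cells) : Set (ℕ × ℕ))

/-- the arm of a cell: number of cells of `μ` strictly east of it in its row -/
def arm (μ : YoungDiagram) (c : ℕ × ℕ) : ℕ :=
  (μ.cells.filter fun d => d.1 = c.1 ∧ c.2 < d.2).card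

/-- the leg of a cell: number of cells of `μ` strictly north of it in its column -/
def leg (μ : YoungDiagram) (c : ℕ × ℕ) : ℕ :=
  (μ.cells.filter fun d => d.2 = c.2 ∧ c.1 < d.1).card




section Alg
variable {F : Type*} [Field F] {ι : Type*} [DecidableEq ι]

lemma coeff01_prod (S : Finset ι) (f : ι → F) :
    (∏ x ∈ S, (1 - Polynomial.C (f x) * Polynomial.X)).coeff 0 = 1 ∧
    (∏ x ∈ S, (1 - Polynomial.C (f x) * Polynomial.X)).coeff 1 = -∑ x ∈ S, f x := by
  induction S using Finset.induction with
  | empty => simp [Polynomial.coeff_one]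
  | insert a S' hx ih =>
    rw [Finset.prod_insert hx, Finset.sum_insert hx]
    have hrw : (1 - Polynomial.C (f a) * Polynomial.X) *
        (∏ x ∈ S', (1 - Polynomial.C (f x) * Polynomial.X)) =
        (∏ x ∈ S', (1 - Polynomial.C (f x) * Polynomial.X)) -
          Polynomial.C (f a) * (Polynomial.X * ∏ x ∈ S', (1 - Polynomial.C (f x) * Polynomial.X)) := by
      ring
    rw [hrw]
    refine ⟨by simp [ih.1], ?_⟩
    rw [Polynomial.coeff_sub, Polynomial.coeff_C_mul,
      show (1:ℕ) = 0 + 1 from rfl, Polynomial.coeff_X_mul, ih.2, ih.1]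
    ring

lemma natDeg_one_sub (a : F) (ha : a ≠ 0) :
    (1 - Polynomial.C a * Polynomial.X).natDegree = 1 := by
  rw [show (1 - Polynomial.C a * Polynomial.X) = Polynomial.C (-a) * Polynomial.X + Polynomial.C 1 by
    simp; ring]
  exact Polynomial.natDegree_linear (neg_ne_zero.mpr ha)

lemma one_sub_ne (a : F) : (1 - Polynomial.C a * Polynomial.X) ≠ 0 := by
  intro h
  have := congrArg (fun p => Polynomial.coeff p 0) h
  simp [Polynomial.coeff_one] at this

lemma leadingCoeff_one_sub (a : F) (ha : a ≠ 0) :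
    (1 - Polynomial.C a * Polynomial.X).leadingCoeff = -a := by
  rw [Polynomial.leadingCoeff, natDeg_one_sub a ha]
  simp [Polynomial.coeff_one]

lemma natDeg_prod_one_sub (S : Finset ι) (f : ι → F) (hf : ∀ x ∈ S, f x ≠ 0) :
    (∏ x ∈ S, (1 - Polynomial.C (f x) * Polynomial.X)).natDegree = S.card := by
  rw [Polynomial.natDegree_prod _ _ (fun x _ => one_sub_ne (f x))]
  rw [Finset.sum_congr rfl (fun x hx => natDeg_one_sub (f x) (hf x hx))]
  simp

lemma leadingCoeff_prod_one_sub (S : Finset ι) (f : ι → F) (hf : ∀ x ∈ S, f x ≠ 0) :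
    (∏ x ∈ S, (1 - Polynomial.C (f x) * Polynomial.X)).leadingCoeff = ∏ x ∈ S, (-(f x)) := by
  rw [Polynomial.leadingCoeff_prod]
  exact Finset.prod_congr rfl (fun x hx => leadingCoeff_one_sub (f x) (hf x hx))

lemma inv_one_sub_C_mul_X (a : F) :
    (1 - PowerSeries.C (R := F) a * PowerSeries.X)⁻¹ = PowerSeries.mk (fun n => a ^ n) := by
  have h : PowerSeries.constantCoeff (R := F) (1 - PowerSeries.C (R := F) a * PowerSeries.X) ≠ 0 := by
    simp
  rw [eq_comm, PowerSeries.eq_inv_iff_mul_eq_one h]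
  ext n
  have hrw : (PowerSeries.mk (fun n => a ^ n)) * (1 - PowerSeries.C (R := F) a * PowerSeries.X)
      = PowerSeries.mk (fun n => a ^ n)
        - PowerSeries.C (R := F) a * (PowerSeries.X * PowerSeries.mk (fun n => a ^ n)) := by ring
  rw [hrw]
  cases n with
  | zero => simp
  | succ m =>
    rw [map_sub, PowerSeries.coeff_mk, PowerSeries.coeff_C_mul,
      PowerSeries.coeff_succ_X_mul, PowerSeries.coeff_mk, PowerSeries.coeff_one]
    simp [pow_succ]; ring

end Alg

section Key
variable {F : Type*} [Field F] {ι : Type*} [DecidableEq ι]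

set_option maxHeartbeats 1000000 in
lemma key_identity (s T : Finset ι) (R A : ι → F) (β : F)
    (hR0 : ∀ i ∈ s, R i ≠ 0) (hA0 : ∀ j ∈ T, A j ≠ 0)
    (hRinj : ∀ i ∈ s, ∀ j ∈ s, R i = R j → i = j)
    (hcard : T.card = s.card + 1)
    (hlead : ∏ j ∈ T, (-A j) = β * ∏ i ∈ s, (-R i))
    (d : ι → F)
    (hd : ∀ i ∈ s, d i = (∏ j ∈ T, (1 - A j / R i)) / (∏ i' ∈ s.erase i, (1 - R i' / R i))) :
    (∑ i ∈ s, d i * R i = ∑ i ∈ s, R i - ∑ j ∈ T, A j - β) ∧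
    (∀ m : ℕ, 2 ≤ m →
      PowerSeries.coeff (R := F) m ((∏ j ∈ T, (1 - PowerSeries.C (R := F) (A j) * PowerSeries.X)) *
        (∏ i ∈ s, (1 - PowerSeries.C (R := F) (R i) * PowerSeries.X))⁻¹) = ∑ i ∈ s, d i * R i ^ m) := by
  set ℓ := s.card with hl
  set α : F := 1 - ∑ i ∈ s, d i with hα
  set D : Polynomial F := ∏ i ∈ s, (1 - Polynomial.C (R i) * Polynomial.X) with hD
  set N : Polynomial F := ∏ j ∈ T, (1 - Polynomial.C (A j) * Polynomial.X) with hN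
  set Di : ι → Polynomial F :=
    fun i => ∏ i' ∈ s.erase i, (1 - Polynomial.C (R i') * Polynomial.X) with hDi
  -- denominators nonzero
  have hden : ∀ i ∈ s, (∏ i' ∈ s.erase i, (1 - R i' / R i)) ≠ 0 := by
    intro i hi
    refine Finset.prod_ne_zero_iff.mpr (fun i' hi' => ?_)
    rw [Finset.mem_erase] at hi'
    intro h
    have h1 : R i' / R i = 1 := by linear_combination -h
    rw [div_eq_one_iff_eq (hR0 i hi)] at h1
    exact hi'.1 (hRinj i' hi'.2 i hi h1)
  -- the difference polynomial
  set Δ : Polynomial F :=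
    N - ((Polynomial.C α + Polynomial.C β * Polynomial.X) * D + ∑ i ∈ s, Polynomial.C (d i) * Di i)
    with hΔ
  have hevalfac : ∀ (S : Finset ι) (f : ι → F) (x : F),
      Polynomial.eval x (∏ y ∈ S, (1 - Polynomial.C (f y) * Polynomial.X)) =
        ∏ y ∈ S, (1 - f y * x) := by
    intro S f x
    rw [Polynomial.eval_prod]
    exact Finset.prod_congr rfl (fun y _ => by simp)
  have heval0 : Polynomial.eval 0 Δ = 0 := by
    simp only [hΔ, Polynomial.eval_sub, Polynomial.eval_add, Polynomial.eval_mul,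
      Polynomial.eval_finset_sum, Polynomial.eval_C, Polynomial.eval_X, hD, hN, hDi]
    simp only [hevalfac]
    simp [hα]
  have hevalR : ∀ r ∈ s, Polynomial.eval (R r)⁻¹ Δ = 0 := by
    intro r hr
    have hDz : Polynomial.eval (R r)⁻¹ D = 0 := by
      rw [hD, Polynomial.eval_prod]
      refine Finset.prod_eq_zero hr ?_
      simp [mul_inv_cancel₀ (hR0 r hr)]
    have hsum : Polynomial.eval (R r)⁻¹ (∑ i ∈ s, Polynomial.C (d i) * Di i)
        = d r * Polynomial.eval (R r)⁻¹ (Di r) := by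
      rw [Polynomial.eval_finset_sum]
      refine Finset.sum_eq_single_of_mem r hr ?_ |>.trans (by simp)
      intro i hi hne
      have : Polynomial.eval (R r)⁻¹ (Di i) = 0 := by
        rw [hDi, Polynomial.eval_prod]
        refine Finset.prod_eq_zero (Finset.mem_erase.mpr ⟨fun h => hne h.symm, hr⟩) ?_
        simp [mul_inv_cancel₀ (hR0 r hr)]
      rw [Polynomial.eval_mul, this, mul_zero]
    rw [hΔ, Polynomial.eval_sub, Polynomial.eval_add, Polynomial.eval_mul, hsum, hDz, mul_zero,
      zero_add]
    have hNe : Polynomial.eval (R r)⁻¹ N = ∏ j ∈ T, (1 - A j / R r) := by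
      rw [hN, hevalfac]
      exact Finset.prod_congr rfl (fun j _ => by rw [div_eq_mul_inv])
    have hDie : Polynomial.eval (R r)⁻¹ (Di r) = ∏ i' ∈ s.erase r, (1 - R i' / R r) := by
      simp only [hDi]
      rw [hevalfac]
      exact Finset.prod_congr rfl (fun j _ => by rw [div_eq_mul_inv])
    rw [hNe, hDie, hd r hr, div_mul_cancel₀ _ (hden r hr), sub_self]
  -- degrees
  have hNdeg : N.natDegree = ℓ + 1 := by rw [hN, natDeg_prod_one_sub T A hA0, hcard]
  have hDdeg : D.natDegree = ℓ := by rw [hD, natDeg_prod_one_sub s R hR0]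
  have hDideg : ∀ i ∈ s, (Di i).natDegree = ℓ - 1 := by
    intro i hi
    simp only [hDi]
    rw [natDeg_prod_one_sub _ _ (fun x hx => hR0 x (Finset.mem_erase.mp hx).2),
      Finset.card_erase_of_mem hi]
  have hcoeffhi : ∀ m, ℓ + 1 ≤ m → Δ.coeff m = 0 := by
    intro m hm
    obtain ⟨mm, rfl⟩ : ∃ mm, m = mm + 1 := ⟨m - 1, by omega⟩
    have hDm : D.coeff (mm + 1) = 0 :=
      Polynomial.coeff_eq_zero_of_natDegree_lt (by omega)
    have hsummz : (∑ i ∈ s, Polynomial.C (d i) * Di i).coeff (mm + 1) = 0 := by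
      rw [Polynomial.finset_sum_coeff]
      refine Finset.sum_eq_zero (fun i hi => ?_)
      rw [Polynomial.coeff_C_mul,
        Polynomial.coeff_eq_zero_of_natDegree_lt (by rw [hDideg i hi]; omega), mul_zero]
    have hexp : (Polynomial.C α + Polynomial.C β * Polynomial.X) * D =
        Polynomial.C α * D + Polynomial.C β * (Polynomial.X * D) := by ring
    rw [hΔ, Polynomial.coeff_sub, Polynomial.coeff_add, hexp, Polynomial.coeff_add,
      Polynomial.coeff_C_mul, Polynomial.coeff_C_mul, Polynomial.coeff_X_mul, hDm, hsummz,
      mul_zero, zero_add, add_zero]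
    obtain hm' | hm' : ℓ = mm ∨ ℓ < mm := by omega
    · subst hm'
      have hNm : N.coeff (ℓ + 1) = ∏ j ∈ T, (-A j) := by
        have : N.coeff (ℓ + 1) = N.leadingCoeff := by rw [Polynomial.leadingCoeff, hNdeg]
        rw [this, hN, leadingCoeff_prod_one_sub T A hA0]
      have hDl : D.coeff ℓ = ∏ i ∈ s, (-R i) := by
        have : D.coeff ℓ = D.leadingCoeff := by rw [Polynomial.leadingCoeff, hDdeg]
        rw [this, hD, leadingCoeff_prod_one_sub s R hR0]
      rw [hNm, hDl, hlead, sub_self]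
    · rw [Polynomial.coeff_eq_zero_of_natDegree_lt (by omega),
        Polynomial.coeff_eq_zero_of_natDegree_lt (show D.natDegree < mm by omega), mul_zero,
        sub_self]
  -- Δ = 0
  have hΔz : Δ = 0 := by
    by_cases hΔ0 : Δ = 0
    · exact hΔ0
    have hdeglt : Δ.natDegree < ℓ + 1 := by
      by_contra hge
      push_neg at hge
      exact hΔ0 (Polynomial.leadingCoeff_eq_zero.mp (hcoeffhi Δ.natDegree hge))
    set pts : Finset F := insert 0 (s.image fun i => (R i)⁻¹) with hpts
    have hnm : (0:F) ∉ s.image fun i => (R i)⁻¹ := by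
      intro hmem
      obtain ⟨i, hi, h⟩ := Finset.mem_image.mp hmem
      exact hR0 i hi (_root_.inv_eq_zero.mp h)
    have hinjon : Set.InjOn (fun i => (R i)⁻¹) ↑s := by
      intro i hi j hj h
      exact hRinj i (Finset.mem_coe.mp hi) j (Finset.mem_coe.mp hj) (inv_injective h)
    have hptscard : pts.card = ℓ + 1 := by
      rw [hpts, Finset.card_insert_of_notMem hnm, Finset.card_image_of_injOn hinjon]
    refine absurd (Polynomial.eq_zero_of_natDegree_lt_card_of_eval_eq_zero' Δ pts ?_ ?_) hΔ0
    · intro x hx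
      rw [hpts, Finset.mem_insert] at hx
      obtain rfl | hx := hx
      · exact heval0
      · obtain ⟨r, hr, rfl⟩ := Finset.mem_image.mp hx
        exact hevalR r hr
    · omega
  have poly_id : N = (Polynomial.C α + Polynomial.C β * Polynomial.X) * D
      + ∑ i ∈ s, Polynomial.C (d i) * Di i := sub_eq_zero.mp hΔz
  -- conclusion (1): compare coefficients of X^1
  constructor
  · have hc1 := congrArg (fun p => Polynomial.coeff p 1) poly_id
    simp only [Polynomial.coeff_add] at hc1
    have hNc1 : N.coeff 1 = -∑ j ∈ T, A j := (coeff01_prod T A).2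
    have hmain : ((Polynomial.C α + Polynomial.C β * Polynomial.X) * D).coeff 1
        = α * (-∑ i ∈ s, R i) + β := by
      have hexp : (Polynomial.C α + Polynomial.C β * Polynomial.X) * D =
          Polynomial.C α * D + Polynomial.C β * (Polynomial.X * D) := by ring
      rw [hexp, Polynomial.coeff_add, Polynomial.coeff_C_mul, Polynomial.coeff_C_mul,
        show (1:ℕ) = 0 + 1 from rfl, Polynomial.coeff_X_mul, (coeff01_prod s R).1,
        (coeff01_prod s R).2, mul_one]
    have hsum1 : (∑ i ∈ s, Polynomial.C (d i) * Di i).coeff 1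
        = (∑ i ∈ s, d i * R i) - (∑ i ∈ s, d i) * (∑ i ∈ s, R i) := by
      rw [Polynomial.finset_sum_coeff]
      have hterm : ∀ i ∈ s, (Polynomial.C (d i) * Di i).coeff 1
          = d i * R i - d i * ∑ i' ∈ s, R i' := by
        intro i hi
        simp only [hDi]
        rw [Polynomial.coeff_C_mul, (coeff01_prod (s.erase i) R).2,
          Finset.sum_erase_eq_sub hi]
        ring
      rw [Finset.sum_congr rfl hterm, Finset.sum_sub_distrib, ← Finset.sum_mul]
    rw [hNc1, hmain, hsum1, hα] at hc1
    linear_combination -hc1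
  -- conclusion (2): power series coefficients
  · intro m hm
    have hpsid : (∏ j ∈ T, (1 - PowerSeries.C (R := F) (A j) * PowerSeries.X)) =
        (PowerSeries.C (R := F) α + PowerSeries.C (R := F) β * PowerSeries.X) *
          (∏ i ∈ s, (1 - PowerSeries.C (R := F) (R i) * PowerSeries.X)) +
        ∑ i ∈ s, PowerSeries.C (R := F) (d i) *
          (∏ i' ∈ s.erase i, (1 - PowerSeries.C (R := F) (R i') * PowerSeries.X)) := by
      have h := congrArg (Polynomial.coeToPowerSeries.ringHom (R := F)) poly_id
      simpa only [map_prod, map_sum, map_mul, map_add, map_sub, map_one,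
        Polynomial.coeToPowerSeries.ringHom_apply, Polynomial.coe_C, Polynomial.coe_X,
        hN, hD, hDi] using h
    set DS := ∏ i ∈ s, (1 - PowerSeries.C (R := F) (R i) * PowerSeries.X) with hDS
    have hconst1 : ∀ (S : Finset ι) (f : ι → F),
        PowerSeries.constantCoeff (R := F) (∏ x ∈ S, (1 - PowerSeries.C (R := F) (f x) * PowerSeries.X)) = 1 := by
      intro S f
      rw [map_prod]
      rw [Finset.prod_congr rfl (fun x _ => by simp : ∀ x ∈ S,
        PowerSeries.constantCoeff (R := F) (1 - PowerSeries.C (R := F) (f x) * PowerSeries.X) = 1)]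
      simp
    have hDSne : DS ≠ 0 := fun h => one_ne_zero (by rw [← hconst1 s R, ← hDS, h, map_zero])
    have hinv : DS * DS⁻¹ = 1 := PowerSeries.mul_inv_cancel _ (by rw [hDS, hconst1]; exact one_ne_zero)
    have hkey : ∀ i ∈ s, (1 - PowerSeries.C (R := F) (R i) * PowerSeries.X)⁻¹ * DS =
        ∏ i' ∈ s.erase i, (1 - PowerSeries.C (R := F) (R i') * PowerSeries.X) := by
      intro i hi
      have hsplit : DS = (1 - PowerSeries.C (R := F) (R i) * PowerSeries.X) *
          ∏ i' ∈ s.erase i, (1 - PowerSeries.C (R := F) (R i') * PowerSeries.X) := by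
        rw [hDS]
        exact (Finset.mul_prod_erase s _ hi).symm
      rw [hsplit, ← mul_assoc,
        PowerSeries.inv_mul_cancel _ (show PowerSeries.constantCoeff (R := F)
          (1 - PowerSeries.C (R := F) (R i) * PowerSeries.X) ≠ 0 by simp), one_mul]
    have hfrac : (∏ j ∈ T, (1 - PowerSeries.C (R := F) (A j) * PowerSeries.X)) * DS⁻¹ =
        (PowerSeries.C (R := F) α + PowerSeries.C (R := F) β * PowerSeries.X) +
        ∑ i ∈ s, PowerSeries.C (R := F) (d i) * (1 - PowerSeries.C (R := F) (R i) * PowerSeries.X)⁻¹ := by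
      apply mul_right_cancel₀ hDSne
      rw [mul_assoc, PowerSeries.inv_mul_cancel _ (by rw [hDS, hconst1]; exact one_ne_zero),
        mul_one, hpsid]
      conv_rhs => rw [add_mul, Finset.sum_mul]
      congr 1
      refine Finset.sum_congr rfl (fun i hi => ?_)
      rw [mul_assoc, hkey i hi]
    rw [hfrac, map_add, map_sum]
    have h1 : (PowerSeries.coeff (R := F) m) (PowerSeries.C (R := F) α + PowerSeries.C (R := F) β * PowerSeries.X) = 0 := by
      rw [map_add, PowerSeries.coeff_C, PowerSeries.coeff_C_mul, PowerSeries.coeff_X]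
      have h0 : m ≠ 0 := by omega
      have h1' : m ≠ 1 := by omega
      simp [h0, h1']
    rw [h1, zero_add]
    refine Finset.sum_congr rfl (fun i hi => ?_)
    rw [inv_one_sub_C_mul_X, PowerSeries.coeff_C_mul, PowerSeries.coeff_mk]

end Key

section Comb
variable (μ : YoungDiagram)

lemma rowLen_pos_iff (i : ℕ) : 0 < μ.rowLen i ↔ i < μ.colLen 0 := by
  rw [← YoungDiagram.mem_iff_lt_rowLen, ← YoungDiagram.mem_iff_lt_colLen]

lemma isRemovable_iff (i j : ℕ) :
    IsRemovable μ (i, j) ↔ j + 1 = μ.rowLen i ∧ μ.rowLen (i + 1) < μ.rowLen i := by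
  constructor
  · rintro ⟨hmem, hlow⟩
    rw [YoungDiagram.mem_iff_lt_rowLen] at hmem
    have h1 : ¬ (j + 1 < μ.rowLen i) := by
      intro h
      have hx : (i, j + 1) ∈ μ.cells.erase (i, j) := by
        rw [Finset.mem_erase]
        exact ⟨by simp, (YoungDiagram.mem_cells _).mpr (YoungDiagram.mem_iff_lt_rowLen.mpr h)⟩
      have h3 := hlow (show (i, j) ≤ (i, j + 1) by simp) hx
      rw [Finset.mem_coe, Finset.mem_erase] at h3
      exact h3.1 rfl
    have h2 : μ.rowLen (i + 1) < μ.rowLen i := by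
      rcases lt_or_eq_of_le (μ.rowLen_anti i (i + 1) (by omega)) with h | h
      · exact h
      exfalso
      have hx : (i + 1, j) ∈ μ.cells.erase (i, j) := by
        rw [Finset.mem_erase]
        exact ⟨by simp, (YoungDiagram.mem_cells _).mpr
          (YoungDiagram.mem_iff_lt_rowLen.mpr (by omega))⟩
      have h3 := hlow (show (i, j) ≤ (i + 1, j) by simp) hx
      rw [Finset.mem_coe, Finset.mem_erase] at h3
      exact h3.1 rfl
    exact ⟨by omega, h2⟩
  · rintro ⟨h1, h2⟩
    have hmem : (i, j) ∈ μ := YoungDiagram.mem_iff_lt_rowLen.mpr (by omega)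
    refine ⟨hmem, ?_⟩
    intro x y hle hx
    rw [Finset.mem_coe, Finset.mem_erase] at hx
    rw [Finset.mem_coe, Finset.mem_erase]
    obtain ⟨hne, hcell⟩ := hx
    rw [YoungDiagram.mem_cells, YoungDiagram.mem_iff_lt_rowLen] at hcell
    have hle1 : y.1 ≤ x.1 := (Prod.le_def.mp hle).1
    have hle2 : y.2 ≤ x.2 := (Prod.le_def.mp hle).2
    constructor
    · intro heq
      have hy1 : y.1 = i := by rw [heq]
      have hy2 : y.2 = j := by rw [heq]
      apply hne
      have hx1 : x.1 = i := by
        by_contra hgt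
        have hmono := μ.rowLen_anti (i + 1) x.1 (by omega)
        omega
      have hx2 : x.2 = j := by
        rw [hx1] at hcell
        omega
      rw [Prod.ext_iff]
      exact ⟨hx1, hx2⟩
    · rw [YoungDiagram.mem_cells, YoungDiagram.mem_iff_lt_rowLen]
      have hmono := μ.rowLen_anti y.1 x.1 hle1
      omega

lemma isAddable_iff (i j : ℕ) :
    IsAddable μ (i, j) ↔ j = μ.rowLen i ∧ (i = 0 ∨ μ.rowLen i < μ.rowLen (i - 1)) := by
  constructor
  · rintro ⟨hmem, hlow⟩
    rw [YoungDiagram.mem_iff_lt_rowLen, not_lt] at hmem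
    have h1 : j = μ.rowLen i := by
      by_contra h
      have hj : μ.rowLen i < j := by omega
      have hx := hlow (show ((i, j - 1) : ℕ × ℕ) ≤ (i, j) by simp) (by simp)
      rcases Finset.mem_insert.mp hx with h' | h'
      · have h'' := congrArg Prod.snd h'
        simp at h''
        omega
      · rw [YoungDiagram.mem_cells, YoungDiagram.mem_iff_lt_rowLen] at h'
        omega
    refine ⟨h1, ?_⟩
    rcases Nat.eq_zero_or_pos i with h | h
    · exact Or.inl h
    right
    have hx := hlow (show ((i - 1, j) : ℕ × ℕ) ≤ (i, j) by simp) (by simp)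
    rcases Finset.mem_insert.mp hx with h' | h'
    · have h'' := congrArg Prod.fst h'
      simp at h''
      omega
    · rw [YoungDiagram.mem_cells, YoungDiagram.mem_iff_lt_rowLen] at h'
      omega
  · rintro ⟨h1, h2⟩
    constructor
    · rw [YoungDiagram.mem_iff_lt_rowLen]; omega
    intro x y hle hx
    rw [Finset.mem_coe, Finset.mem_insert] at hx
    rw [Finset.mem_coe, Finset.mem_insert]
    have hle1 : y.1 ≤ x.1 := (Prod.le_def.mp hle).1
    have hle2 : y.2 ≤ x.2 := (Prod.le_def.mp hle).2
    rcases hx with h' | h'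
    · have hx1 : x.1 = i := by rw [h']
      have hx2 : x.2 = j := by rw [h']
      by_cases hy : y = (i, j)
      · exact Or.inl hy
      right
      rw [YoungDiagram.mem_cells, YoungDiagram.mem_iff_lt_rowLen]
      have hy' : y.1 ≠ i ∨ y.2 ≠ j := by
        by_contra hcon
        push_neg at hcon
        exact hy (Prod.ext_iff.mpr ⟨hcon.1, hcon.2⟩)
      rcases hy' with h | h
      · have hi0 : i ≠ 0 := by omega
        have hmono := μ.rowLen_anti y.1 (i - 1) (by omega)
        rcases h2 with h2 | h2
        · omega
        · omega
      · have hmono := μ.rowLen_anti y.1 i (by omega)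
        omega
    · exact Or.inr ((YoungDiagram.mem_cells _).mpr
        (μ.isLowerSet hle ((YoungDiagram.mem_cells _).mp h')))

end Comb

section Comb2

def IR (μ : YoungDiagram) : Finset ℕ :=
  (Finset.range (μ.colLen 0 + 1)).filter fun i => μ.rowLen (i + 1) < μ.rowLen i

def IA (μ : YoungDiagram) : Finset ℕ := insert 0 ((IR μ).image (· + 1))

variable (μ : YoungDiagram)

lemma mem_IR {i : ℕ} : i ∈ IR μ ↔ μ.rowLen (i + 1) < μ.rowLen i := by
  simp only [IR, Finset.mem_filter, Finset.mem_range]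
  refine ⟨fun h => h.2, fun h => ⟨?_, h⟩⟩
  have h1 : 0 < μ.rowLen i := by omega
  have := (rowLen_pos_iff μ i).mp h1
  omega

lemma mem_IA {i : ℕ} : i ∈ IA μ ↔ (i = 0 ∨ μ.rowLen i < μ.rowLen (i - 1)) := by
  simp only [IA, Finset.mem_insert, Finset.mem_image, mem_IR]
  constructor
  · rintro (rfl | ⟨j, hj, rfl⟩)
    · exact Or.inl rfl
    · right; simpa using hj
  · rintro (rfl | h)
    · exact Or.inl rfl
    rcases Nat.eq_zero_or_pos i with h0 | h0
    · exact Or.inl h0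
    right
    refine ⟨i - 1, ?_, Nat.succ_pred_eq_of_pos h0⟩
    rw [show i - 1 + 1 = i by omega]
    exact h

lemma zero_not_mem_IR_image : (0 : ℕ) ∉ (IR μ).image (· + 1) := by simp

lemma card_IA : (IA μ).card = (IR μ).card + 1 := by
  rw [IA, Finset.card_insert_of_notMem (zero_not_mem_IR_image μ),
    Finset.card_image_of_injective _ (fun a b h => by omega)]

lemma IR_subset : IR μ ⊆ Finset.range (μ.colLen 0) := by
  intro i hi
  rw [mem_IR] at hi
  rw [Finset.mem_range]
  have h1 : 0 < μ.rowLen i := by omega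
  exact (rowLen_pos_iff μ i).mp h1

lemma rowLen_top : μ.rowLen (μ.colLen 0) = 0 := by
  by_contra h
  have := (rowLen_pos_iff μ _).mp (Nat.pos_of_ne_zero h)
  omega

lemma rowLen_eq_of_not_IR {i : ℕ} (hi : i ∉ IR μ) : μ.rowLen (i + 1) = μ.rowLen i := by
  rw [mem_IR] at hi
  have := μ.rowLen_anti i (i + 1) (by omega)
  omega

lemma telescope_nat : ∑ i ∈ IR μ, μ.rowLen i = μ.rowLen 0 + ∑ i ∈ IR μ, μ.rowLen (i + 1) := by
  have hz : ∑ i ∈ IR μ, ((μ.rowLen i : ℤ) - μ.rowLen (i + 1))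
      = ∑ i ∈ Finset.range (μ.colLen 0), ((μ.rowLen i : ℤ) - μ.rowLen (i + 1)) := by
    refine Finset.sum_subset (IR_subset μ) (fun i _ hni => ?_)
    rw [rowLen_eq_of_not_IR μ hni]
    ring
  rw [Finset.sum_range_sub' (fun i => (μ.rowLen i : ℤ))] at hz
  rw [rowLen_top] at hz
  rw [Finset.sum_sub_distrib] at hz
  have h1 : (∑ i ∈ IR μ, (μ.rowLen i : ℤ)) = ∑ i ∈ IR μ, μ.rowLen i := by push_cast; ring
  have h2 : (∑ i ∈ IR μ, (μ.rowLen (i + 1) : ℤ)) = ∑ i ∈ IR μ, μ.rowLen (i + 1) := by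
    push_cast; ring
  have : ((∑ i ∈ IR μ, μ.rowLen i : ℕ) : ℤ)
      = (μ.rowLen 0 : ℤ) + (∑ i ∈ IR μ, μ.rowLen (i + 1) : ℕ) := by
    push_cast
    push_cast at hz
    omega
  exact_mod_cast this

end Comb2

section FieldFacts

lemma algmap_inj : Function.Injective (algebraMap (MvPolynomial (Fin 2) ℚ) K) :=
  IsFractionRing.injective _ _

lemma t_pow_q_pow (i j : ℕ) : t ^ i * q ^ j
    = algebraMap (MvPolynomial (Fin 2) ℚ) K (MvPolynomial.X 1 ^ i * MvPolynomial.X 0 ^ j) := by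
  simp [t, q, map_mul, map_pow]

lemma w_ne_zero (p : ℕ × ℕ) : w p ≠ 0 := by
  obtain ⟨i, j⟩ := p
  simp only [w]
  rw [t_pow_q_pow]
  rw [map_ne_zero_iff _ algmap_inj]
  exact mul_ne_zero (pow_ne_zero _ (MvPolynomial.X_ne_zero _))
    (pow_ne_zero _ (MvPolynomial.X_ne_zero _))

lemma w_inj : Function.Injective w := by
  rintro ⟨i, j⟩ ⟨i', j'⟩ h
  simp only [w] at h
  rw [t_pow_q_pow, t_pow_q_pow] at h
  have h2 := algmap_inj h
  rw [MvPolynomial.X_pow_eq_monomial, MvPolynomial.X_pow_eq_monomial,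
    MvPolynomial.X_pow_eq_monomial, MvPolynomial.X_pow_eq_monomial,
    MvPolynomial.monomial_mul, MvPolynomial.monomial_mul,
    MvPolynomial.monomial_eq_monomial_iff] at h2
  rcases h2 with ⟨hs, _⟩ | ⟨h1, _⟩
  · have e0 := DFunLike.congr_fun hs (0 : Fin 2)
    have e1 := DFunLike.congr_fun hs (1 : Fin 2)
    simp [Finsupp.add_apply, Finsupp.single_apply] at e0 e1
    simp [Prod.ext_iff]
    exact ⟨e1, e0⟩
  · norm_num at h1

lemma q_ne_zero : q ≠ 0 := by
  have := w_ne_zero (0, 1)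
  simpa [w] using this

lemma t_ne_zero : t ≠ 0 := by
  have := w_ne_zero (1, 0)
  simpa [w] using this

lemma q_ne_one : q ≠ 1 := by
  intro h
  have h2 : (MvPolynomial.X 0 : MvPolynomial (Fin 2) ℚ) = 1 := algmap_inj (by rw [map_one]; exact h)
  have h3 := congrArg MvPolynomial.constantCoeff h2
  simp at h3

lemma t_ne_one : t ≠ 1 := by
  intro h
  have h2 : (MvPolynomial.X 1 : MvPolynomial (Fin 2) ℚ) = 1 := algmap_inj (by rw [map_one]; exact h)
  have h3 := congrArg MvPolynomial.constantCoeff h2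
  simp at h3

lemma M_ne_zero : (1 - t) * (1 - q) ≠ 0 :=
  mul_ne_zero (sub_ne_zero.mpr (Ne.symm t_ne_one)) (sub_ne_zero.mpr (Ne.symm q_ne_one))

end FieldFacts

section MainComb
variable (μ : YoungDiagram)

lemma cells_eq : μ.cells = (Finset.range (μ.colLen 0)).biUnion
    (fun i => {i} ×ˢ Finset.range (μ.rowLen i)) := by
  ext ⟨a, b⟩
  simp only [Finset.mem_biUnion, Finset.mem_range, Finset.mem_product, Finset.mem_singleton,
    YoungDiagram.mem_cells]
  rw [YoungDiagram.mem_iff_lt_rowLen]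
  constructor
  · intro h
    exact ⟨a, (rowLen_pos_iff μ a).mp (by omega), rfl, h⟩
  · rintro ⟨i, _, rfl, h⟩
    exact h

lemma Bsum_eq : Bsum μ = ∑ i ∈ Finset.range (μ.colLen 0),
    t ^ i * ∑ j ∈ Finset.range (μ.rowLen i), q ^ j := by
  rw [Bsum, cells_eq, Finset.sum_biUnion]
  · refine Finset.sum_congr rfl fun i _ => ?_
    rw [Finset.sum_product, Finset.sum_singleton, Finset.mul_sum]
    exact Finset.sum_congr rfl fun j _ => by simp [w]
  · intro x _ y _ hxy
    simp only [Function.onFun, Finset.disjoint_left]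
    rintro ⟨a, b⟩ ha hb
    simp only [Finset.mem_product, Finset.mem_singleton] at ha hb
    exact hxy (ha.1.symm.trans hb.1)

lemma MB_eq : (1 - t) * (1 - q) * Bsum μ
    = ∑ i ∈ Finset.range (μ.colLen 0), (t ^ i - t ^ (i + 1)) * (1 - q ^ μ.rowLen i) := by
  rw [Bsum_eq, Finset.mul_sum]
  refine Finset.sum_congr rfl fun i _ => ?_
  have hg : (1 - q) * ∑ j ∈ Finset.range (μ.rowLen i), q ^ j = 1 - q ^ μ.rowLen i := by
    linear_combination -geom_sum_mul q (μ.rowLen i)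
  calc (1 - t) * (1 - q) * (t ^ i * ∑ j ∈ Finset.range (μ.rowLen i), q ^ j)
      = (1 - t) * t ^ i * ((1 - q) * ∑ j ∈ Finset.range (μ.rowLen i), q ^ j) := by ring
    _ = (1 - t) * t ^ i * (1 - q ^ μ.rowLen i) := by rw [hg]
    _ = (t ^ i - t ^ (i + 1)) * (1 - q ^ μ.rowLen i) := by ring

lemma sumA_eq : ∑ i ∈ IA μ, t ^ i * q ^ μ.rowLen i
    = q ^ μ.rowLen 0 + ∑ i ∈ IR μ, t ^ (i + 1) * q ^ μ.rowLen (i + 1) := by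
  rw [IA, Finset.sum_insert (zero_not_mem_IR_image μ),
    Finset.sum_image (fun a _ b _ h => by omega)]
  simp

lemma qt_sumR : q * t * (∑ i ∈ IR μ, t ^ i * q ^ (μ.rowLen i - 1))
    = ∑ i ∈ IR μ, t ^ (i + 1) * q ^ μ.rowLen i := by
  rw [Finset.mul_sum]
  refine Finset.sum_congr rfl fun i hi => ?_
  have h1 : μ.rowLen i - 1 + 1 = μ.rowLen i := by
    have := mem_IR μ |>.mp hi
    omega
  calc q * t * (t ^ i * q ^ (μ.rowLen i - 1)) = t ^ (i + 1) * (q ^ (μ.rowLen i - 1) * q) := by ring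
    _ = t ^ (i + 1) * q ^ (μ.rowLen i - 1 + 1) := by rw [pow_succ q (μ.rowLen i - 1)]
    _ = t ^ (i + 1) * q ^ μ.rowLen i := by rw [h1]

/-- Identity (II) -/
lemma combII : ∑ i ∈ IA μ, t ^ i * q ^ μ.rowLen i
    = q * t * (∑ i ∈ IR μ, t ^ i * q ^ (μ.rowLen i - 1)) + 1 - (1 - t) * (1 - q) * Bsum μ := by
  rw [sumA_eq, qt_sumR, MB_eq]
  set n := μ.colLen 0 with hn
  have hext : ∑ i ∈ IR μ, (t ^ (i + 1) * q ^ μ.rowLen (i + 1) - t ^ (i + 1) * q ^ μ.rowLen i)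
      = ∑ i ∈ Finset.range n, (t ^ (i + 1) * q ^ μ.rowLen (i + 1) - t ^ (i + 1) * q ^ μ.rowLen i) := by
    refine Finset.sum_subset (IR_subset μ) (fun i _ hni => ?_)
    rw [rowLen_eq_of_not_IR μ hni]
    ring
  have hstep : ∑ i ∈ Finset.range n,
        (t ^ (i + 1) * q ^ μ.rowLen (i + 1) - t ^ (i + 1) * q ^ μ.rowLen i)
      + ∑ i ∈ Finset.range n, (t ^ i - t ^ (i + 1)) * (1 - q ^ μ.rowLen i)
      = 1 - q ^ μ.rowLen 0 := by
    rw [← Finset.sum_add_distrib]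
    have hterm : ∀ i ∈ Finset.range n,
        (t ^ (i + 1) * q ^ μ.rowLen (i + 1) - t ^ (i + 1) * q ^ μ.rowLen i)
          + (t ^ i - t ^ (i + 1)) * (1 - q ^ μ.rowLen i)
        = (t ^ i - t ^ i * q ^ μ.rowLen i) - (t ^ (i + 1) - t ^ (i + 1) * q ^ μ.rowLen (i + 1)) := by
      intro i _
      ring
    rw [Finset.sum_congr rfl hterm,
      Finset.sum_range_sub' (fun i => t ^ i - t ^ i * q ^ μ.rowLen i)]
    rw [hn, rowLen_top]
    simp
  have hext' : ∑ i ∈ IR μ, t ^ (i + 1) * q ^ μ.rowLen (i + 1)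
        - ∑ i ∈ IR μ, t ^ (i + 1) * q ^ μ.rowLen i
      = ∑ i ∈ Finset.range n, t ^ (i + 1) * q ^ μ.rowLen (i + 1)
        - ∑ i ∈ Finset.range n, t ^ (i + 1) * q ^ μ.rowLen i := by
    rw [← Finset.sum_sub_distrib, ← Finset.sum_sub_distrib]
    exact hext
  have hstep' : ∑ i ∈ Finset.range n, t ^ (i + 1) * q ^ μ.rowLen (i + 1)
        - ∑ i ∈ Finset.range n, t ^ (i + 1) * q ^ μ.rowLen i
      + ∑ i ∈ Finset.range n, (t ^ i - t ^ (i + 1)) * (1 - q ^ μ.rowLen i)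
      = 1 - q ^ μ.rowLen 0 := by
    rw [← Finset.sum_sub_distrib]
    exact hstep
  linear_combination hext' + hstep'

/-- Identity (I) -/
lemma combI : ∏ i ∈ IA μ, t ^ i * q ^ μ.rowLen i
    = (q * t) ^ (IR μ).card * ∏ i ∈ IR μ, t ^ i * q ^ (μ.rowLen i - 1) := by
  rw [IA, Finset.prod_insert (zero_not_mem_IR_image μ),
    Finset.prod_image (fun a _ b _ h => by omega)]
  have hRHS : (q * t) ^ (IR μ).card * ∏ i ∈ IR μ, t ^ i * q ^ (μ.rowLen i - 1)
      = ∏ i ∈ IR μ, t ^ (i + 1) * q ^ μ.rowLen i := by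
    rw [← Finset.prod_const (q * t), ← Finset.prod_mul_distrib]
    refine Finset.prod_congr rfl fun i hi => ?_
    have h1 : μ.rowLen i - 1 + 1 = μ.rowLen i := by
      have := mem_IR μ |>.mp hi
      omega
    calc q * t * (t ^ i * q ^ (μ.rowLen i - 1)) = t ^ (i + 1) * (q ^ (μ.rowLen i - 1) * q) := by
          ring
      _ = t ^ (i + 1) * q ^ (μ.rowLen i - 1 + 1) := by rw [pow_succ q (μ.rowLen i - 1)]
      _ = t ^ (i + 1) * q ^ μ.rowLen i := by rw [h1]
  rw [hRHS, Finset.prod_mul_distrib, Finset.prod_mul_distrib]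
  have hq : q ^ μ.rowLen 0 * ∏ i ∈ IR μ, q ^ μ.rowLen (i + 1) = ∏ i ∈ IR μ, q ^ μ.rowLen i := by
    rw [Finset.prod_pow_eq_pow_sum, Finset.prod_pow_eq_pow_sum, ← pow_add, telescope_nat μ]
  calc t ^ 0 * q ^ μ.rowLen 0 * ((∏ i ∈ IR μ, t ^ (i + 1)) * ∏ i ∈ IR μ, q ^ μ.rowLen (i + 1))
      = (∏ i ∈ IR μ, t ^ (i + 1)) * (q ^ μ.rowLen 0 * ∏ i ∈ IR μ, q ^ μ.rowLen (i + 1)) := by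
        ring
    _ = (∏ i ∈ IR μ, t ^ (i + 1)) * ∏ i ∈ IR μ, q ^ μ.rowLen i := by rw [hq]

end MainComb

/-- the summation formulas for the corner-weight `e₁^⊥`-Pieri coefficients
`c_{μν}`: they sum to `B_μ`, and with weight `R_i^k` they give `(qt/M)` times the
coefficient of `y^{k+1}` in `∏(1 − (A/qt)·y)/∏(1 − R·y)`. -/
theorem stmt_6 (μ : YoungDiagram) (Rem Add : Finset (ℕ × ℕ))
    (hRem : ∀ x, x ∈ Rem ↔ IsRemovable μ x)
    (hAdd : ∀ x, x ∈ Add ↔ IsAddable μ x)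
    (hne : Rem.Nonempty)
    (M : K) (hM : M = (1 - t) * (1 - q))
    (c : (ℕ × ℕ) → K)
    (hc : ∀ r ∈ Rem, c r =
      q * t * w r / M * (∏ a ∈ Add, (1 - w a / (q * t * w r))) /
        ∏ r' ∈ Rem.erase r, (1 - w r' / w r)) :
    (∑ r ∈ Rem, c r) = Bsum μ ∧
    ∀ k : ℕ, 1 ≤ k →
      (∑ r ∈ Rem, c r * w r ^ k) =
        q * t / M *
          coeff (R := K) (k + 1)
            ((∏ a ∈ Add, (1 - C (R := K) (w a / (q * t)) * X)) *
              (∏ r ∈ Rem, (1 - C (R := K) (w r) * X))⁻¹) := by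
  classical
  have hqt0 : q * t ≠ 0 := mul_ne_zero q_ne_zero t_ne_zero
  have hM0 : M ≠ 0 := by rw [hM]; exact M_ne_zero
  -- identify Rem and Add with images of index sets
  have hRemEq : Rem = (IR μ).image (fun i => (i, μ.rowLen i - 1)) := by
    ext x
    obtain ⟨i, j⟩ := x
    rw [hRem, isRemovable_iff]
    simp only [Finset.mem_image, mem_IR, Prod.mk.injEq]
    constructor
    · rintro ⟨h1, h2⟩
      exact ⟨i, h2, rfl, by omega⟩
    · rintro ⟨a, ha, rfl, rfl⟩
      exact ⟨by omega, ha⟩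
  have hAddEq : Add = (IA μ).image (fun i => (i, μ.rowLen i)) := by
    ext x
    obtain ⟨i, j⟩ := x
    rw [hAdd, isAddable_iff]
    simp only [Finset.mem_image, mem_IA, Prod.mk.injEq]
    constructor
    · rintro ⟨h1, h2⟩
      exact ⟨i, h2, rfl, h1.symm⟩
    · rintro ⟨a, ha, rfl, rfl⟩
      exact ⟨rfl, ha⟩
  have hinjR : ∀ x ∈ IR μ, ∀ y ∈ IR μ,
      (fun i => (i, μ.rowLen i - 1)) x = (fun i => (i, μ.rowLen i - 1)) y → x = y :=
    fun a _ b _ h => (Prod.ext_iff.mp h).1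
  have hinjA : ∀ x ∈ IA μ, ∀ y ∈ IA μ,
      (fun i => (i, μ.rowLen i)) x = (fun i => (i, μ.rowLen i)) y → x = y :=
    fun a _ b _ h => (Prod.ext_iff.mp h).1
  have hcardR : Rem.card = (IR μ).card := by
    rw [hRemEq, Finset.card_image_of_injOn hinjR]
  have hcard : Add.card = Rem.card + 1 := by
    rw [hAddEq, Finset.card_image_of_injOn hinjA, hcardR, card_IA]
  have hsumR : ∑ r ∈ Rem, w r = ∑ i ∈ IR μ, t ^ i * q ^ (μ.rowLen i - 1) := by
    rw [hRemEq, Finset.sum_image hinjR]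
    exact Finset.sum_congr rfl fun i _ => by simp [w]
  have hsumA : ∑ a ∈ Add, w a = ∑ i ∈ IA μ, t ^ i * q ^ μ.rowLen i := by
    rw [hAddEq, Finset.sum_image hinjA]
    exact Finset.sum_congr rfl fun i _ => by simp [w]
  have hprodR : ∏ r ∈ Rem, w r = ∏ i ∈ IR μ, t ^ i * q ^ (μ.rowLen i - 1) := by
    rw [hRemEq, Finset.prod_image hinjR]
    exact Finset.prod_congr rfl fun i _ => by simp [w]
  have hprodA : ∏ a ∈ Add, w a = ∏ i ∈ IA μ, t ^ i * q ^ μ.rowLen i := by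
    rw [hAddEq, Finset.prod_image hinjA]
    exact Finset.prod_congr rfl fun i _ => by simp [w]
  -- identities (I) and (II) in terms of Rem and Add
  have hI : ∏ a ∈ Add, w a = (q * t) ^ Rem.card * ∏ r ∈ Rem, w r := by
    rw [hprodA, hprodR, hcardR]
    exact combI μ
  have hII : ∑ a ∈ Add, w a = q * t * (∑ r ∈ Rem, w r) + 1 - M * Bsum μ := by
    rw [hsumA, hsumR, hM]
    exact combII μ
  -- instantiate the key algebraic identity
  set d : (ℕ × ℕ) → K := fun r =>
    (∏ a ∈ Add, (1 - w a / (q * t) / w r)) / (∏ r' ∈ Rem.erase r, (1 - w r' / w r)) with hd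
  have hlead : ∏ a ∈ Add, (-(w a / (q * t))) = -(q * t)⁻¹ * ∏ r ∈ Rem, (-(w r)) := by
    have h1 : ∏ a ∈ Add, (-(w a / (q * t))) = (-(q * t)⁻¹) ^ Add.card * ∏ a ∈ Add, w a := by
      rw [← Finset.prod_const (-(q * t)⁻¹), ← Finset.prod_mul_distrib]
      exact Finset.prod_congr rfl fun a _ => by rw [div_eq_mul_inv]; ring
    have h2 : ∏ r ∈ Rem, (-(w r)) = (-1 : K) ^ Rem.card * ∏ r ∈ Rem, w r := by
      rw [← Finset.prod_const (-1 : K), ← Finset.prod_mul_distrib]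
      exact Finset.prod_congr rfl fun r _ => by ring
    rw [h1, h2, hcard, hI, neg_pow, neg_pow, inv_pow]
    have hne : (q * t) ^ (Rem.card + 1) ≠ 0 := pow_ne_zero _ hqt0
    have hq0 := q_ne_zero
    have ht0 := t_ne_zero
    field_simp
    ring
  obtain ⟨hkey1, hkey2⟩ := key_identity Rem Add w (fun a => w a / (q * t)) (-(q * t)⁻¹)
    (fun r _ => w_ne_zero r) (fun a _ => div_ne_zero (w_ne_zero a) hqt0)
    (fun i _ j _ h => w_inj h) hcard hlead d (fun r _ => rfl)
  have hc' : ∀ r ∈ Rem, c r = q * t * w r / M * d r := by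
    intro r hr
    rw [hc r hr, mul_div_assoc]
    congr 1
    rw [hd]
    congr 1
    exact Finset.prod_congr rfl fun a _ => by rw [div_div]
  constructor
  · -- part (a)
    have e1 : ∑ r ∈ Rem, c r = q * t / M * ∑ r ∈ Rem, d r * w r := by
      rw [Finset.mul_sum]
      refine Finset.sum_congr rfl fun r hr => ?_
      rw [hc' r hr]
      ring
    rw [e1, hkey1]
    have hdivA : ∑ a ∈ Add, (w a / (q * t)) = (∑ a ∈ Add, w a) / (q * t) := by
      rw [Finset.sum_div]
    rw [hdivA, hII]
    have hq0 := q_ne_zero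
    have ht0 := t_ne_zero
    field_simp
    ring
  · -- part (b)
    intro k hk
    have e1 : ∑ r ∈ Rem, c r * w r ^ k = q * t / M * ∑ r ∈ Rem, d r * w r ^ (k + 1) := by
      rw [Finset.mul_sum]
      refine Finset.sum_congr rfl fun r hr => ?_
      rw [hc' r hr]
      ring
    rw [e1, ← hkey2 (k + 1) (by omega)]

end
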